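/- Let χ : ℝ → ℝ be convex, monotone increasing, and continuously differentiable. Let t < 0 and c ≥ 0 be real numbers with t + c < 0. Then χ(t + c) − χ(t) ≤ (χ(0) − χ(t)) · (log(−t) − log(−(t + c))). -/

import Mathlib

/-- Key integral estimate in the proof of Lemma 5.4: for a `C¹` convex increasing
function `χ`, real numbers `t < 0`, `c ≥ 0` with `t + c < 0`, one has
`χ (t + c) - χ t ≤ (χ 0 - χ t) * (log (-t) - log (-(t + c)))`. -/
theorem convex_weight_log_estimate (χ : ℝ → ℝ)
    (hχ_conv : ConvexOn ℝ Set.univ χ)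
    (hχ_mono : Monotone χ)
    (hχ_C1 : ContDiff ℝ 1 χ)
    (t c : ℝ) (ht : t < 0) (hc : 0 ≤ c) (htc : t + c < 0) :
    χ (t + c) - χ t ≤ (χ 0 - χ t) * (Real.log (-t) - Real.log (-(t + c))) := by
  have hd : Differentiable ℝ χ := hχ_C1.differentiable one_ne_zero
  have hdc : Continuous (deriv χ) := hχ_C1.continuous_deriv le_rfl
  have hle : t ≤ t + c := by linarith
  have huIcc : Set.uIcc t (t + c) = Set.Icc t (t + c) := Set.uIcc_of_le hle
  -- Fundamental theorem of calculus
  have heq : χ (t + c) - χ t = ∫ r in t..(t + c), deriv χ r :=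
    (intervalIntegral.integral_deriv_eq_sub (fun x _ => hd x)
      (hdc.intervalIntegrable _ _)).symm
  -- pointwise bound
  have hbound : ∀ r ∈ Set.Icc t (t + c), deriv χ r ≤ (χ 0 - χ t) * (-r)⁻¹ := by
    intro r hr
    have hr0 : r < 0 := lt_of_le_of_lt hr.2 htc
    have h1 : deriv χ r ≤ (χ 0 - χ r) / (0 - r) := by
      have := hχ_conv.deriv_le_slope (Set.mem_univ r) (Set.mem_univ 0) hr0 (hd r)
      simpa [slope_def_field] using this
    have h2 : (χ 0 - χ r) / (0 - r) ≤ (χ 0 - χ t) / (0 - r) := by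
      have hmono := hχ_mono hr.1
      gcongr
    calc deriv χ r ≤ (χ 0 - χ t) / (0 - r) := h1.trans h2
      _ = (χ 0 - χ t) * (-r)⁻¹ := by rw [zero_sub, div_eq_mul_inv]
  -- continuity of the comparing function on the interval
  have hcontg : ContinuousOn (fun r : ℝ => (χ 0 - χ t) * (-r)⁻¹) (Set.uIcc t (t + c)) := by
    apply ContinuousOn.mul continuousOn_const
    apply ContinuousOn.inv₀ (continuousOn_neg)
    intro x hx
    rw [huIcc] at hx
    have : x < 0 := lt_of_le_of_lt hx.2 htc
    simpa using this.ne
  have hintg : IntervalIntegrable (fun r : ℝ => (χ 0 - χ t) * (-r)⁻¹) MeasureTheory.volume t (t + c) :=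
    hcontg.intervalIntegrable
  have hmono_int : (∫ r in t..(t + c), deriv χ r) ≤ ∫ r in t..(t + c), (χ 0 - χ t) * (-r)⁻¹ :=
    intervalIntegral.integral_mono_on hle (hdc.intervalIntegrable _ _) hintg hbound
  -- compute the right integral
  have hne : ∀ x ∈ Set.uIcc t (t + c), x ≠ 0 := by
    intro x hx
    rw [huIcc] at hx
    exact (lt_of_le_of_lt hx.2 htc).ne
  have hinv : (∫ r in t..(t + c), r⁻¹) = Real.log ((t + c) / t) :=
    integral_inv (by intro h; exact hne 0 h rfl)
  have hcalc : (∫ r in t..(t + c), (χ 0 - χ t) * (-r)⁻¹)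
      = (χ 0 - χ t) * (Real.log (-t) - Real.log (-(t + c))) := by
    rw [intervalIntegral.integral_const_mul]
    congr 1
    have : (∫ r in t..(t + c), (-r)⁻¹) = -∫ r in t..(t + c), r⁻¹ := by
      rw [← intervalIntegral.integral_neg]
      congr 1; ext r; rw [inv_neg]
    rw [this, hinv]
    rw [show (t + c) / t = (-(t + c)) / (-t) by ring,
      Real.log_div (by linarith) (by linarith)]
    ring
  linarith [heq ▸ hmono_int, hcalc ▸ hmono_int]
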